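/- Let p be a prime with 4 dividing p−1, let λ be an element of order 4 in (ℤ/pℤ)ˣ (so −λ is the other element of order 4), and let k ∈ ℤ/pℤ with k ≠ 2⁻¹(1+λ). For s ∈ ℤ/pℤ define R̄_{4,s} = {a, b, a^{−λ} b^{−λ−1} c^s, a^{λ−1} b^λ c^{1−s}} (i.e., R_{4,s} with λ replaced by −λ) and S̄_{4,s} = R̄_{4,s} ∪ R̄_{4,s}⁻¹. Then the assignment a ↦ a, b ↦ a^{λ−1} b^λ c^{1−k+λ}, c ↦ c^λ extends to an automorphism φ of G_2(p) with φ(R_{4,k}) = R̄_{4,k−λ}; hence φ(S_{4,k}) = S̄_{4,k−λ}, the graphs Cay(G_2(p), S_{4,k}) and Cay(G_2(p), S̄_{4,k−λ}) are isomorphic, and k − λ ≠ 2⁻¹(1−λ). In particular the family of graphs Γ_{4,k} is independent of the choice of the element λ of order 4. -/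

import Mathlib

/-- The Cayley graph of a group `G` with respect to a subset `S`:
vertices are the elements of `G`, and `x`, `y` are adjacent iff `y * x⁻¹ ∈ S`
(symmetrized; when `S = S⁻¹` and `1 ∉ S` this is the usual Cayley graph). -/
def Cay (G : Type*) [Group G] (S : Set G) : SimpleGraph G where
  Adj x y := x ≠ y ∧ (y * x⁻¹ ∈ S ∨ x * y⁻¹ ∈ S)
  symm := ⟨fun x y h => ⟨h.1.symm, h.2.symm⟩⟩
  loopless := ⟨fun x h => h.1 rfl⟩

namespace SimpleGraph
variable {V : Type*} (Γ : SimpleGraph V)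

/-- The automorphism group acts transitively on vertices. -/
def VertexTransitive : Prop := ∀ u v : V, ∃ f : Γ ≃g Γ, f u = v

/-- The automorphism group acts transitively on (undirected) edges. -/
def EdgeTransitive : Prop :=
  ∀ e₁ ∈ Γ.edgeSet, ∀ e₂ ∈ Γ.edgeSet, ∃ f : Γ ≃g Γ, Sym2.map f e₁ = e₂

/-- The automorphism group acts transitively on arcs (ordered pairs of adjacent vertices). -/
def ArcTransitive : Prop :=
  ∀ u v x y : V, Γ.Adj u v → Γ.Adj x y → ∃ f : Γ ≃g Γ, f u = x ∧ f v = y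

/-- A graph is half-arc-transitive if it is vertex- and edge- but not arc-transitive. -/
def HalfArcTransitive : Prop :=
  Γ.VertexTransitive ∧ Γ.EdgeTransitive ∧ ¬ Γ.ArcTransitive

end SimpleGraph

/-- The right regular representation `Ĝ = {x ↦ x * g | g ∈ G}` as a subgroup of the
automorphism group of the Cayley graph `Cay G S`. -/
def rightRegular (G : Type*) [Group G] (S : Set G) :
    Subgroup ((Cay G S) ≃g (Cay G S)) where
  carrier := {f | ∃ g : G, ∀ x, f x = x * g}
  one_mem' := ⟨1, fun x => (mul_one x).symm⟩
  mul_mem' := by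
    rintro f f' ⟨g, hg⟩ ⟨g', hg'⟩
    exact ⟨g' * g, fun x => by
      show f (f' x) = x * (g' * g)
      rw [hg', hg, mul_assoc]⟩
  inv_mem' := by
    rintro f ⟨g, hg⟩
    refine ⟨g⁻¹, fun x => ?_⟩
    show f.symm x = x * g⁻¹
    have h1 : f (x * g⁻¹) = x := by rw [hg, inv_mul_cancel_right]
    have h2 : f.symm (f (x * g⁻¹)) = x * g⁻¹ := RelIso.symm_apply_apply f _
    rw [h1] at h2
    exact h2

/-- A Cayley graph is *normal* if the right regular representation is a normal subgroup
of its full automorphism group. -/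
def CayleyNormal (G : Type*) [Group G] (S : Set G) : Prop :=
  (rightRegular G S).Normal

/-- `Aut(G, S)`: the group of automorphisms of `G` preserving the subset `S` setwise. -/
def autStab (G : Type*) [Group G] (S : Set G) : Subgroup (MulAut G) where
  carrier := {α | α '' S = S}
  one_mem' := by simp
  mul_mem' := by
    intro α β hα hβ
    show (α * β) '' S = S
    have : ⇑(α * β) = ⇑α ∘ ⇑β := rfl
    rw [this, Set.image_comp, hβ, hα]
  inv_mem' := by
    intro α hα
    show ⇑α⁻¹ '' S = S
    conv_lhs => rw [← hα]
    rw [← Set.image_comp]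
    have : ⇑α⁻¹ ∘ ⇑α = id := by
      funext x
      exact α.symm_apply_apply x
    rw [this, Set.image_id]

/-- The setoid on an index set identifying indices with isomorphic graphs. -/
def graphIsoSetoid {ι V : Type*} (F : ι → SimpleGraph V) : Setoid ι where
  r k l := Nonempty (F k ≃g F l)
  iseqv := ⟨fun _ => ⟨RelIso.refl _⟩, fun ⟨f⟩ => ⟨f.symm⟩, fun ⟨f⟩ ⟨g⟩ => ⟨f.trans g⟩⟩
/-- Relations for the group `G₁(p) = ⟨a, b | a^(p²) = 1, b^p = 1, b⁻¹ a b = a^(1+p)⟩`. -/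
def G1Rels (p : ℕ) : Set (FreeGroup (Fin 2)) :=
  {FreeGroup.of 0 ^ (p ^ 2), FreeGroup.of 1 ^ p,
    (FreeGroup.of 1)⁻¹ * FreeGroup.of 0 * FreeGroup.of 1 * (FreeGroup.of 0 ^ (1 + p))⁻¹}

/-- The nonabelian metacyclic group of order `p³`. -/
abbrev G1 (p : ℕ) : Type := PresentedGroup (G1Rels p)

/-- The generator `a` of `G₁(p)`. -/
def a1 (p : ℕ) : G1 p := PresentedGroup.of 0

/-- The generator `b` of `G₁(p)`. -/
def b1 (p : ℕ) : G1 p := PresentedGroup.of 1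

/-- The connection set `T^{j,k} = {b^k a^(e^i), (b^k a^(e^i))⁻¹ : 0 ≤ i ≤ j-1} ⊆ G₁(p)`,
where `e` is a unit of `ℤ/p²ℤ` (of order `j`). -/
def Tset (p : ℕ) (e : (ZMod (p ^ 2))ˣ) (j k : ℕ) : Set (G1 p) :=
  ((fun i : ℕ => b1 p ^ k * a1 p ^ ((e ^ i : (ZMod (p ^ 2))ˣ) : ZMod (p ^ 2)).val) ''
      Set.Iio j) ∪
  ((fun i : ℕ => b1 p ^ k * a1 p ^ ((e ^ i : (ZMod (p ^ 2))ˣ) : ZMod (p ^ 2)).val) ''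
      Set.Iio j)⁻¹

open scoped commutatorElement

/-- Relations for the Heisenberg group
`G₂(p) = ⟨a, b, c | a^p = b^p = c^p = 1, [a,b] = c, [a,c] = [b,c] = 1⟩`. -/
def G2Rels (p : ℕ) : Set (FreeGroup (Fin 3)) :=
  {FreeGroup.of 0 ^ p, FreeGroup.of 1 ^ p, FreeGroup.of 2 ^ p,
    ⁅FreeGroup.of (0 : Fin 3), FreeGroup.of 1⁆ * (FreeGroup.of 2)⁻¹,
    ⁅FreeGroup.of (0 : Fin 3), FreeGroup.of 2⁆, ⁅FreeGroup.of (1 : Fin 3), FreeGroup.of 2⁆}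

/-- The nonabelian group of order `p³` and exponent `p`. -/
abbrev G2 (p : ℕ) : Type := PresentedGroup (G2Rels p)

/-- The generator `a` of `G₂(p)`. -/
def a2 (p : ℕ) : G2 p := PresentedGroup.of 0

/-- The generator `b` of `G₂(p)`. -/
def b2 (p : ℕ) : G2 p := PresentedGroup.of 1

/-- The generator `c = [a,b]` of `G₂(p)`. -/
def c2 (p : ℕ) : G2 p := PresentedGroup.of 2

/-- Power of an element of `G₂(p)` by an exponent in `ℤ/pℤ` (well defined as every
element of `G₂(p)` has order dividing `p`). -/
def pw {p : ℕ} (x : G2 p) (n : ZMod p) : G2 p := x ^ n.val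

/-- `R_{4,k} = {a, b, a^λ b^(λ-1) c^k, a^(-λ-1) b^(-λ) c^(1-k)} ⊆ G₂(p)`. -/
def R4 (p : ℕ) (lam k : ZMod p) : Set (G2 p) :=
  {a2 p, b2 p,
    pw (a2 p) lam * pw (b2 p) (lam - 1) * pw (c2 p) k,
    pw (a2 p) (-lam - 1) * pw (b2 p) (-lam) * pw (c2 p) (1 - k)}

/-- `S_{4,k} = R_{4,k} ∪ R_{4,k}⁻¹ ⊆ G₂(p)`. -/
def S4 (p : ℕ) (lam k : ZMod p) : Set (G2 p) :=
  R4 p lam k ∪ (R4 p lam k)⁻¹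

namespace S13

variable {p : ℕ}

lemma rel_one {r : FreeGroup (Fin 3)} (hr : r ∈ G2Rels p) :
    PresentedGroup.mk (G2Rels p) r = 1 :=
  (QuotientGroup.eq_one_iff r).mpr (Subgroup.subset_normalClosure hr)

lemma a2_pow_p : a2 p ^ p = 1 := by
  rw [a2, PresentedGroup.of, ← map_pow]
  exact rel_one (by simp [G2Rels])

lemma b2_pow_p : b2 p ^ p = 1 := by
  rw [b2, PresentedGroup.of, ← map_pow]
  exact rel_one (by simp [G2Rels])

lemma c2_pow_p : c2 p ^ p = 1 := by
  rw [c2, PresentedGroup.of, ← map_pow]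
  exact rel_one (by simp [G2Rels])

lemma comm_ab : ⁅a2 p, b2 p⁆ = c2 p := by
  have h := rel_one (p := p)
    (r := ⁅FreeGroup.of (0 : Fin 3), FreeGroup.of 1⁆ * (FreeGroup.of 2)⁻¹) (by simp [G2Rels])
  rw [map_mul, map_inv] at h
  have h2 : (PresentedGroup.mk (G2Rels p)) ⁅FreeGroup.of (0 : Fin 3), FreeGroup.of 1⁆
      = ⁅a2 p, b2 p⁆ := by
    simp [commutatorElement_def, map_mul, map_inv, a2, b2, PresentedGroup.of]
  rw [h2] at h
  have := mul_eq_one_iff_eq_inv.mp h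
  simpa [c2, PresentedGroup.of] using this

lemma comm_ac : Commute (a2 p) (c2 p) := by
  rw [← commutatorElement_eq_one_iff_commute]
  have h := rel_one (p := p)
    (r := ⁅FreeGroup.of (0 : Fin 3), FreeGroup.of 2⁆) (by simp [G2Rels])
  simpa [commutatorElement_def, map_mul, map_inv, a2, c2, PresentedGroup.of] using h

lemma comm_bc : Commute (b2 p) (c2 p) := by
  rw [← commutatorElement_eq_one_iff_commute]
  have h := rel_one (p := p)
    (r := ⁅FreeGroup.of (1 : Fin 3), FreeGroup.of 2⁆) (by simp [G2Rels])
  simpa [commutatorElement_def, map_mul, map_inv, b2, c2, PresentedGroup.of] using h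

lemma ab_eq : a2 p * b2 p = c2 p * (b2 p * a2 p) := by
  have h := comm_ab (p := p)
  rw [commutatorElement_def] at h
  rw [← h]
  group

section
variable [Fact p.Prime]

lemma pow_mod {G : Type*} [Group G] {x : G} (hx : x ^ p = 1) (n : ℕ) :
    x ^ (n % p) = x ^ n := by
  conv_rhs => rw [← Nat.div_add_mod n p]
  rw [pow_add, pow_mul, hx, one_pow, one_mul]

lemma pow_pow_p {G : Type*} [Group G] {x : G} (hx : x ^ p = 1) (M : ℕ) :
    (x ^ M) ^ p = 1 := by
  rw [← pow_mul, mul_comm, pow_mul, hx, one_pow]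

lemma pw_add {x : G2 p} (hx : x ^ p = 1) (m n : ZMod p) :
    pw x (m + n) = pw x m * pw x n := by
  rw [pw, pw, pw, ZMod.val_add, pow_mod hx, pow_add]

lemma pw_zero (x : G2 p) : pw x 0 = 1 := by
  rw [pw, ZMod.val_zero, pow_zero]

lemma pw_one (x : G2 p) : pw x 1 = x := by
  rw [pw, ZMod.val_one, pow_one]

lemma pw_neg {x : G2 p} (hx : x ^ p = 1) (m : ZMod p) :
    (pw x m)⁻¹ = pw x (-m) := by
  apply inv_eq_of_mul_eq_one_right
  rw [← pw_add hx, add_neg_cancel, pw_zero]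

lemma pw_natpow {x : G2 p} (hx : x ^ p = 1) (m : ZMod p) (N : ℕ) :
    (pw x m) ^ N = pw x (m * N) := by
  rw [pw, pw]
  have h1 : (m * (N : ZMod p)).val = m.val * (N % p) % p := by
    rw [ZMod.val_mul, ZMod.val_natCast]
  rw [h1, pow_mod hx, pow_mul, pow_mod (pow_pow_p hx m.val) N]

lemma pw_pw {x : G2 p} (hx : x ^ p = 1) (m n : ZMod p) :
    pw (pw x m) n = pw x (m * n) := by
  have := pw_natpow hx m n.val
  rwa [ZMod.natCast_val, ZMod.cast_id] at this

lemma c_central (x : G2 p) : Commute (c2 p) x := by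
  have hx : x ∈ Subgroup.centralizer {c2 p} := by
    apply PresentedGroup.generated_by
    intro j
    rw [Subgroup.mem_centralizer_singleton_iff]
    fin_cases j
    · exact (comm_ac (p := p)).eq
    · exact (comm_bc (p := p)).eq
    · rfl
  exact (Subgroup.mem_centralizer_singleton_iff.mp hx).symm

lemma a_mul_b_pow (N : ℕ) : a2 p * b2 p ^ N = c2 p ^ N * b2 p ^ N * a2 p := by
  induction N with
  | zero => simp
  | succ N ih =>
    calc a2 p * b2 p ^ (N + 1) = (a2 p * b2 p ^ N) * b2 p := by
          rw [pow_succ, mul_assoc]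
      _ = c2 p ^ N * b2 p ^ N * (a2 p * b2 p) := by rw [ih, mul_assoc, mul_assoc]
      _ = c2 p ^ N * b2 p ^ N * (c2 p * (b2 p * a2 p)) := by rw [ab_eq]
      _ = c2 p ^ N * (c2 p * b2 p ^ N) * (b2 p * a2 p) := by
          rw [(c_central (b2 p ^ N)).eq]; group
      _ = c2 p ^ (N + 1) * b2 p ^ (N + 1) * a2 p := by
          rw [pow_succ, pow_succ]; group

lemma a_pow_mul_b_pow (M N : ℕ) :
    a2 p ^ M * b2 p ^ N = c2 p ^ (M * N) * b2 p ^ N * a2 p ^ M := by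
  induction M with
  | zero => simp
  | succ M ih =>
    calc a2 p ^ (M + 1) * b2 p ^ N = a2 p ^ M * (a2 p * b2 p ^ N) := by
          rw [pow_succ, mul_assoc]
      _ = a2 p ^ M * (c2 p ^ N * b2 p ^ N * a2 p) := by rw [a_mul_b_pow]
      _ = c2 p ^ N * (a2 p ^ M * b2 p ^ N) * a2 p := by
          rw [← mul_assoc, ← mul_assoc, ← ((c_central (a2 p ^ M)).pow_left N).eq]; group
      _ = c2 p ^ N * (c2 p ^ (M * N) * b2 p ^ N * a2 p ^ M) * a2 p := by rw [ih]
      _ = c2 p ^ ((M + 1) * N) * b2 p ^ N * a2 p ^ (M + 1) := by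
          rw [add_mul, one_mul, pow_add, pow_succ]; group
end
section
variable [Fact p.Prime]

lemma cpw_central (m : ZMod p) (x : G2 p) : Commute (pw (c2 p) m) x :=
  (c_central x).pow_left m.val

lemma aa_pair (m n : ZMod p) : pw (a2 p) m * pw (a2 p) n = pw (a2 p) (m + n) :=
  (pw_add a2_pow_p m n).symm

lemma aa_move (m n : ZMod p) (t : G2 p) :
    pw (a2 p) m * (pw (a2 p) n * t) = pw (a2 p) (m + n) * t := by
  rw [← mul_assoc, aa_pair]

lemma bb_pair (m n : ZMod p) : pw (b2 p) m * pw (b2 p) n = pw (b2 p) (m + n) :=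
  (pw_add b2_pow_p m n).symm

lemma bb_move (m n : ZMod p) (t : G2 p) :
    pw (b2 p) m * (pw (b2 p) n * t) = pw (b2 p) (m + n) * t := by
  rw [← mul_assoc, bb_pair]

lemma cc_pair (m n : ZMod p) : pw (c2 p) m * pw (c2 p) n = pw (c2 p) (m + n) :=
  (pw_add c2_pow_p m n).symm

lemma cc_move (m n : ZMod p) (t : G2 p) :
    pw (c2 p) m * (pw (c2 p) n * t) = pw (c2 p) (m + n) * t := by
  rw [← mul_assoc, cc_pair]

lemma ca_pair (m i : ZMod p) : pw (c2 p) m * pw (a2 p) i = pw (a2 p) i * pw (c2 p) m :=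
  (cpw_central m (pw (a2 p) i)).eq

lemma ca_move (m i : ZMod p) (t : G2 p) :
    pw (c2 p) m * (pw (a2 p) i * t) = pw (a2 p) i * (pw (c2 p) m * t) := by
  rw [← mul_assoc, ca_pair, mul_assoc]

lemma cb_pair (m j : ZMod p) : pw (c2 p) m * pw (b2 p) j = pw (b2 p) j * pw (c2 p) m :=
  (cpw_central m (pw (b2 p) j)).eq

lemma cb_move (m j : ZMod p) (t : G2 p) :
    pw (c2 p) m * (pw (b2 p) j * t) = pw (b2 p) j * (pw (c2 p) m * t) := by
  rw [← mul_assoc, cb_pair, mul_assoc]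

lemma pw_ab (i j : ZMod p) :
    pw (a2 p) i * pw (b2 p) j = pw (c2 p) (i * j) * (pw (b2 p) j * pw (a2 p) i) := by
  rw [pw, pw, pw, ZMod.val_mul, pow_mod c2_pow_p, a_pow_mul_b_pow, mul_assoc]

lemma ba_pair (j i : ZMod p) :
    pw (b2 p) j * pw (a2 p) i = pw (a2 p) i * (pw (c2 p) (-(i * j)) * pw (b2 p) j) := by
  have h : pw (c2 p) (-(i * j)) * (pw (a2 p) i * pw (b2 p) j) = pw (b2 p) j * pw (a2 p) i := by
    rw [pw_ab, ← mul_assoc, cc_pair, neg_add_cancel, pw_zero, one_mul]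
  rw [← h, ca_move]

lemma ba_move (j i : ZMod p) (t : G2 p) :
    pw (b2 p) j * (pw (a2 p) i * t) =
      pw (a2 p) i * (pw (c2 p) (-(i * j)) * (pw (b2 p) j * t)) := by
  rw [← mul_assoc, ba_pair, mul_assoc, mul_assoc]

end

def elt (p : ℕ) (i j l : ZMod p) : G2 p :=
  pw (a2 p) i * pw (b2 p) j * pw (c2 p) l

section
variable [Fact p.Prime]

lemma elt_congr {i j l i' j' l' : ZMod p} (h1 : i = i') (h2 : j = j') (h3 : l = l') :
    pw (a2 p) i * (pw (b2 p) j * pw (c2 p) l) =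
      pw (a2 p) i' * (pw (b2 p) j' * pw (c2 p) l') := by
  rw [h1, h2, h3]

lemma mul_elt (i j l i' j' l' : ZMod p) :
    elt p i j l * elt p i' j' l' = elt p (i + i') (j + j') (l + l' - j * i') := by
  unfold elt
  simp only [mul_assoc, ba_move, ba_pair, ca_move, ca_pair, cb_move, cb_pair,
    aa_move, aa_pair, bb_move, bb_pair, cc_move, cc_pair]
  exact elt_congr (by ring) (by ring) (by ring)

lemma elt_zero : elt p 0 0 0 = 1 := by
  simp [elt, pw_zero]

lemma elt_a : elt p 1 0 0 = a2 p := by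
  simp [elt, pw_zero, pw_one]

lemma elt_b : elt p 0 1 0 = b2 p := by
  simp [elt, pw_zero, pw_one]

lemma elt_cpw (n : ZMod p) : elt p 0 0 n = pw (c2 p) n := by
  simp [elt, pw_zero]

lemma elt_c : elt p 0 0 1 = c2 p := by
  rw [elt_cpw, pw_one]

lemma elt_eq_one {i j l : ZMod p} (h1 : i = 0) (h2 : j = 0) (h3 : l = 0) :
    elt p i j l = 1 := by
  rw [h1, h2, h3, elt_zero]

lemma elt_inv (i j l : ZMod p) : (elt p i j l)⁻¹ = elt p (-i) (-j) (-l - j * i) := by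
  apply inv_eq_of_mul_eq_one_right
  rw [mul_elt]
  exact elt_eq_one (by ring) (by ring) (by ring)

lemma elt_congr' {i j l i' j' l' : ZMod p} (h1 : i = i') (h2 : j = j') (h3 : l = l') :
    elt p i j l = elt p i' j' l' := by
  rw [h1, h2, h3]

lemma comm_elt (i j l i' j' l' : ZMod p) :
    ⁅elt p i j l, elt p i' j' l'⁆ = elt p 0 0 (i * j' - j * i') := by
  rw [commutatorElement_def, elt_inv, elt_inv, mul_elt, mul_elt, mul_elt]
  exact elt_congr' (by ring) (by ring) (by ring)
end
lemma two_choose (N : ℕ) : 2 * N.choose 2 = N * (N - 1) := by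
  cases N with
  | zero => rfl
  | succ M =>
    rw [Nat.choose_two_right, Nat.succ_sub_one]
    exact Nat.mul_div_cancel' (by rw [mul_comm]; exact (Nat.even_mul_succ_self M).two_dvd)

/-- `Tz n` is the image of `n.val.choose 2` in `ZMod p`. -/
def Tz (p : ℕ) (n : ZMod p) : ZMod p := ((n.val.choose 2 : ℕ) : ZMod p)

section
variable [Fact p.Prime]

lemma val_cast_self (n : ZMod p) : ((n.val : ℕ) : ZMod p) = n :=
  ZMod.natCast_rightInverse n

lemma twoT (n : ZMod p) : 2 * Tz p n = n ^ 2 - n := by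
  have hn : ((n.val : ℕ) : ZMod p) = n := val_cast_self n
  rcases hv : n.val with _ | M
  · have hn0 : n = 0 := by rw [← hn, hv, Nat.cast_zero]
    rw [Tz, hv, hn0]
    simp
  · have hn' : n = ((M : ZMod p) + 1) := by rw [← hn, hv]; push_cast; ring
    rw [Tz, hv]
    calc (2 : ZMod p) * (((M + 1).choose 2 : ℕ) : ZMod p)
        = ((2 * (M + 1).choose 2 : ℕ) : ZMod p) := by push_cast; ring
      _ = (((M + 1) * ((M + 1) - 1) : ℕ) : ZMod p) := by rw [two_choose]
      _ = n ^ 2 - n := by rw [Nat.succ_sub_one]; push_cast; rw [hn']; ring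

lemma elt_pow (i j l : ZMod p) (N : ℕ) :
    elt p i j l ^ N =
      elt p (N * i) (N * j) (N * l - i * j * ((N.choose 2 : ℕ) : ZMod p)) := by
  induction N with
  | zero =>
    rw [pow_zero]
    exact (elt_eq_one (by simp) (by simp) (by simp)).symm
  | succ N ih =>
    rw [pow_succ, ih, mul_elt]
    refine elt_congr' (by push_cast; ring) (by push_cast; ring) ?_
    rw [Nat.choose_succ_succ, Nat.choose_one_right]
    push_cast
    ring

lemma two_ne_zero' (hp2 : p ≠ 2) : (2 : ZMod p) ≠ 0 := by
  have : ((2 : ℕ) : ZMod p) ≠ 0 := by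
    rw [Ne, ZMod.natCast_eq_zero_iff]
    intro h
    exact hp2 ((Nat.prime_dvd_prime_iff_eq Fact.out Nat.prime_two).mp h)
  simpa using this

lemma choose_p_two (hp2 : p ≠ 2) : ((p.choose 2 : ℕ) : ZMod p) = 0 := by
  have h : ((2 * p.choose 2 : ℕ) : ZMod p) = ((p * (p - 1) : ℕ) : ZMod p) := by
    rw [two_choose]
  push_cast at h
  rw [ZMod.natCast_self, zero_mul] at h
  rcases mul_eq_zero.mp h with h' | h'
  · exact absurd h' (two_ne_zero' hp2)
  · exact h'

lemma elt_pow_p (hp2 : p ≠ 2) (i j l : ZMod p) : elt p i j l ^ p = 1 := by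
  rw [elt_pow, choose_p_two hp2]
  exact elt_eq_one (by simp) (by simp) (by simp)

lemma pw_elt (i j l n : ZMod p) :
    pw (elt p i j l) n = elt p (n * i) (n * j) (n * l - i * j * Tz p n) := by
  rw [pw, elt_pow]
  exact elt_congr' (by rw [val_cast_self]) (by rw [val_cast_self])
    (by rw [val_cast_self, Tz])
end
section
variable [Fact p.Prime]

/-- The generator map for a candidate endomorphism of `G₂(p)`. -/
def genMap (p : ℕ) (i0 j0 l0 i1 j1 l1 m : ZMod p) : Fin 3 → G2 p := fun x =>
  match x with
  | 0 => elt p i0 j0 l0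
  | 1 => elt p i1 j1 l1
  | 2 => elt p 0 0 m

lemma genMap_rels (hp2 : p ≠ 2) (i0 j0 l0 i1 j1 l1 m : ZMod p)
    (hm : i0 * j1 - j0 * i1 = m) :
    ∀ r ∈ G2Rels p, FreeGroup.lift (genMap p i0 j0 l0 i1 j1 l1 m) r = 1 := by
  intro r hr
  simp only [G2Rels, Set.mem_insert_iff, Set.mem_singleton_iff] at hr
  rcases hr with rfl | rfl | rfl | rfl | rfl | rfl
  · rw [map_pow, FreeGroup.lift_apply_of]
    exact elt_pow_p hp2 _ _ _
  · rw [map_pow, FreeGroup.lift_apply_of]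
    exact elt_pow_p hp2 _ _ _
  · rw [map_pow, FreeGroup.lift_apply_of]
    exact elt_pow_p hp2 _ _ _
  · rw [map_mul, map_inv, map_commutatorElement, FreeGroup.lift_apply_of, FreeGroup.lift_apply_of,
      FreeGroup.lift_apply_of]
    show ⁅elt p i0 j0 l0, elt p i1 j1 l1⁆ * (elt p 0 0 m)⁻¹ = 1
    rw [comm_elt, hm, mul_inv_cancel]
  · rw [map_commutatorElement, FreeGroup.lift_apply_of, FreeGroup.lift_apply_of]
    show ⁅elt p i0 j0 l0, elt p 0 0 m⁆ = 1
    rw [comm_elt]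
    exact elt_eq_one rfl rfl (by ring)
  · rw [map_commutatorElement, FreeGroup.lift_apply_of, FreeGroup.lift_apply_of]
    show ⁅elt p i1 j1 l1, elt p 0 0 m⁆ = 1
    rw [comm_elt]
    exact elt_eq_one rfl rfl (by ring)

/-- A candidate endomorphism of `G₂(p)` from exponent data. -/
def mkHom (hp2 : p ≠ 2) (i0 j0 l0 i1 j1 l1 m : ZMod p)
    (hm : i0 * j1 - j0 * i1 = m) : G2 p →* G2 p :=
  PresentedGroup.toGroup (genMap_rels hp2 i0 j0 l0 i1 j1 l1 m hm)

lemma mkHom_a (hp2 : p ≠ 2) (i0 j0 l0 i1 j1 l1 m : ZMod p) (hm) :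
    mkHom hp2 i0 j0 l0 i1 j1 l1 m hm (a2 p) = elt p i0 j0 l0 :=
  PresentedGroup.toGroup.of _

lemma mkHom_b (hp2 : p ≠ 2) (i0 j0 l0 i1 j1 l1 m : ZMod p) (hm) :
    mkHom hp2 i0 j0 l0 i1 j1 l1 m hm (b2 p) = elt p i1 j1 l1 :=
  PresentedGroup.toGroup.of _

lemma mkHom_c (hp2 : p ≠ 2) (i0 j0 l0 i1 j1 l1 m : ZMod p) (hm) :
    mkHom hp2 i0 j0 l0 i1 j1 l1 m hm (c2 p) = elt p 0 0 m :=
  PresentedGroup.toGroup.of _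

lemma map_pw (f : G2 p →* G2 p) (x : G2 p) (n : ZMod p) :
    f (pw x n) = pw (f x) n :=
  map_pow f x n.val

lemma map_elt (f : G2 p →* G2 p) (i j l : ZMod p) :
    f (elt p i j l) = pw (f (a2 p)) i * pw (f (b2 p)) j * pw (f (c2 p)) l := by
  rw [elt, map_mul, map_mul, map_pw, map_pw, map_pw]
end
lemma elt_apw (n : ZMod p) [Fact p.Prime] : elt p n 0 0 = pw (a2 p) n := by
  simp [elt, pw_zero]

lemma image_inv_set {G : Type*} [Group G] (φ : G ≃* G) (S : Set G) :
    ⇑φ '' S⁻¹ = (⇑φ '' S)⁻¹ := by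
  ext y
  simp only [Set.mem_inv, Set.mem_image]
  constructor
  · rintro ⟨x, hx, rfl⟩
    exact ⟨x⁻¹, hx, by rw [map_inv]⟩
  · rintro ⟨x, hx, hxy⟩
    exact ⟨x⁻¹, by simpa using hx, by rw [map_inv, hxy, inv_inv]⟩

lemma cay_iso {G : Type*} [Group G] (φ : G ≃* G) {S S' : Set G} (h : ⇑φ '' S = S') :
    Nonempty (Cay G S ≃g Cay G S') := by
  refine ⟨⟨φ.toEquiv, ?_⟩⟩
  intro x y
  show ((Cay G S').Adj (φ x) (φ y)) ↔ (Cay G S).Adj x y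
  show (φ x ≠ φ y ∧ (φ y * (φ x)⁻¹ ∈ S' ∨ φ x * (φ y)⁻¹ ∈ S')) ↔
    (x ≠ y ∧ (y * x⁻¹ ∈ S ∨ x * y⁻¹ ∈ S))
  rw [← h, ← map_inv, ← map_mul, ← map_inv, ← map_mul,
    φ.injective.mem_set_image, φ.injective.mem_set_image, ne_eq, φ.injective.eq_iff]
end S13
open S13 in
/-- The assignment `a ↦ a`, `b ↦ a^(λ-1) b^λ c^(1-k+λ)`, `c ↦ c^λ`
extends to an automorphism `φ` of `G₂(p)` mapping `R_{4,k}` onto `R̄_{4,k-λ}`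
(which is `R_{4,k-λ}` defined with `-λ` in place of `λ`); hence `φ(S_{4,k}) = S̄_{4,k-λ}`,
`Cay(G₂(p), S_{4,k}) ≅ Cay(G₂(p), S̄_{4,k-λ})` and `k - λ ≠ 2⁻¹(1-λ)`: the family of
graphs `Γ_{4,k}` is independent of the choice of the element `λ` of order 4. -/
theorem statement13 (p : ℕ) (hp : p.Prime) (hdvd : 4 ∣ p - 1)
    (lam : (ZMod p)ˣ) (hlam : orderOf lam = 4)
    (k : ZMod p) (hk : k ≠ (2 : ZMod p)⁻¹ * (1 + (lam : ZMod p))) :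
    ∃ φ : MulAut (G2 p),
      φ (a2 p) = a2 p ∧
      φ (b2 p) = pw (a2 p) ((lam : ZMod p) - 1) * pw (b2 p) (lam : ZMod p) *
        pw (c2 p) (1 - k + (lam : ZMod p)) ∧
      φ (c2 p) = pw (c2 p) (lam : ZMod p) ∧
      ⇑φ '' R4 p (lam : ZMod p) k = R4 p (-(lam : ZMod p)) (k - (lam : ZMod p)) ∧
      ⇑φ '' S4 p (lam : ZMod p) k = S4 p (-(lam : ZMod p)) (k - (lam : ZMod p)) ∧
      Nonempty (Cay (G2 p) (S4 p (lam : ZMod p) k) ≃g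
        Cay (G2 p) (S4 p (-(lam : ZMod p)) (k - (lam : ZMod p)))) ∧
      k - (lam : ZMod p) ≠ (2 : ZMod p)⁻¹ * (1 - (lam : ZMod p)) := by
  haveI : Fact p.Prime := ⟨hp⟩
  have hp2 : p ≠ 2 := by rintro rfl; norm_num at hdvd
  set L : ZMod p := (lam : ZMod p) with hLdef
  have h2 : (2 : ZMod p) ≠ 0 := two_ne_zero' hp2
  have hL2 : L ^ 2 = -1 := by
    have h4 : lam ^ 4 = 1 := by rw [← hlam]; exact pow_orderOf_eq_one lam
    have h2' : lam ^ 2 ≠ 1 := by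
      intro h
      have := orderOf_dvd_of_pow_eq_one h
      rw [hlam] at this
      norm_num at this
    have hsq : (L ^ 2) * (L ^ 2) = 1 := by
      have h4' : ((lam ^ 4 : (ZMod p)ˣ) : ZMod p) = 1 := by rw [h4]; rfl
      push_cast at h4'
      linear_combination h4'
    have hne : L ^ 2 ≠ 1 := by
      intro h
      apply h2'
      apply Units.ext
      push_cast
      exact h
    rcases mul_self_eq_one_iff.mp hsq with h | h
    · exact absurd h hne
    · exact h
  have hmΦ : (1 : ZMod p) * L - 0 * (L - 1) = L := by ring
  have hmΨ : (1 : ZMod p) * (-L) - 0 * (-1 - L) = -L := by ring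
  set Φ := mkHom hp2 1 0 0 (L - 1) L (1 - k + L) L hmΦ with hΦdef
  set Ψ := mkHom hp2 1 0 0 (-1 - L) (-L) (1 - k) (-L) hmΨ with hΨdef
  have hΦa : Φ (a2 p) = a2 p := by rw [hΦdef, mkHom_a, elt_a]
  have hΨa : Ψ (a2 p) = a2 p := by rw [hΨdef, mkHom_a, elt_a]
  have hcomp1 : Ψ.comp Φ = MonoidHom.id (G2 p) := by
    apply PresentedGroup.ext
    intro x
    fin_cases x
    · show Ψ (Φ (a2 p)) = a2 p
      rw [hΦa, hΨa]
    · show Ψ (Φ (b2 p)) = b2 p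
      rw [hΦdef, mkHom_b, map_elt, hΨa, hΨdef, mkHom_b, mkHom_c, elt_cpw,
        pw_pw c2_pow_p, ← elt_cpw, pw_elt, ← elt_apw, mul_elt, mul_elt, ← elt_b]
      refine elt_congr' (by linear_combination -hL2) (by linear_combination -hL2) ?_
      apply mul_left_cancel₀ h2
      linear_combination (-(L + L^2)) * twoT L + (-(L^2)) * hL2
    · show Ψ (Φ (c2 p)) = c2 p
      rw [hΦdef, mkHom_c, elt_cpw, map_pw, hΨdef, mkHom_c, elt_cpw, pw_pw c2_pow_p,
        show (-L) * L = 1 by linear_combination -hL2, pw_one]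
  have hcomp2 : Φ.comp Ψ = MonoidHom.id (G2 p) := by
    apply PresentedGroup.ext
    intro x
    fin_cases x
    · show Φ (Ψ (a2 p)) = a2 p
      rw [hΨa, hΦa]
    · show Φ (Ψ (b2 p)) = b2 p
      rw [hΨdef, mkHom_b, map_elt, hΦa, hΦdef, mkHom_b, mkHom_c, elt_cpw,
        pw_pw c2_pow_p, ← elt_cpw, pw_elt, ← elt_apw, mul_elt, mul_elt, ← elt_b]
      refine elt_congr' (by linear_combination -hL2) (by linear_combination -hL2) ?_
      apply mul_left_cancel₀ h2
      linear_combination (-(L^2 - L)) * twoT (-L) + (-(L^2)) * hL2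
    · show Φ (Ψ (c2 p)) = c2 p
      rw [hΨdef, mkHom_c, elt_cpw, map_pw, hΦdef, mkHom_c, elt_cpw, pw_pw c2_pow_p,
        show L * (-L) = 1 by linear_combination -hL2, pw_one]
  set φA : G2 p ≃* G2 p := MonoidHom.toMulEquiv Φ Ψ hcomp1 hcomp2 with hφA
  have hco : ∀ x, φA x = Φ x := fun _ => rfl
  have hRL : R4 p L k = {a2 p, b2 p, elt p L (L - 1) k, elt p (-L - 1) (-L) (1 - k)} := rfl
  have hRR : R4 p (-L) (k - L) =
      {a2 p, b2 p, elt p (-L) (-L - 1) (k - L), elt p (L - 1) L (1 - k + L)} := by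
    rw [R4, show (-(-L) - 1 : ZMod p) = L - 1 by ring, show (-(-L) : ZMod p) = L by ring,
      show (1 - (k - L) : ZMod p) = 1 - k + L by ring]
    rfl
  have h3 : Φ (elt p L (L - 1) k) = elt p (-L) (-L - 1) (k - L) := by
    rw [hΦdef, map_elt, mkHom_a, mkHom_b, mkHom_c, pw_elt, pw_elt, pw_elt,
      mul_elt, mul_elt]
    refine elt_congr' (by linear_combination hL2) (by linear_combination hL2) ?_
    apply mul_left_cancel₀ h2
    linear_combination (-(L^2 - L)) * twoT (L-1) + (-L^2 + 4*L - 2) * hL2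
  have h4 : Φ (elt p (-L - 1) (-L) (1 - k)) = b2 p := by
    rw [hΦdef, map_elt, mkHom_a, mkHom_b, mkHom_c, pw_elt, pw_elt, pw_elt,
      mul_elt, mul_elt, ← elt_b]
    refine elt_congr' (by linear_combination -hL2) (by linear_combination -hL2) ?_
    apply mul_left_cancel₀ h2
    linear_combination (-(L^2 - L)) * twoT (-L) + (-(L^2)) * hL2
  have hΦb : Φ (b2 p) = elt p (L - 1) L (1 - k + L) := by rw [hΦdef, mkHom_b]
  have hR4 : ⇑φA '' R4 p L k = R4 p (-L) (k - L) := by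
    rw [hRL]
    simp only [Set.image_insert_eq, Set.image_singleton, hco]
    rw [hΦa, hΦb, h3, h4, hRR]
    ext z
    simp only [Set.mem_insert_iff, Set.mem_singleton_iff]
    tauto
  have hS4 : ⇑φA '' S4 p L k = S4 p (-L) (k - L) := by
    rw [S4, Set.image_union, image_inv_set φA, hR4, S4]
  refine ⟨φA, hco _ ▸ hΦa, ?_, ?_, hR4, hS4, cay_iso φA hS4, ?_⟩
  · rw [hco, hΦb]; rfl
  · rw [hco, hΦdef, mkHom_c, elt_cpw]
  · intro h
    apply hk
    have hkL : k = (2 : ZMod p)⁻¹ * (1 - L) + L := by linear_combination h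
    rw [hkL]
    have h2i : (2 : ZMod p) * (2 : ZMod p)⁻¹ = 1 := mul_inv_cancel₀ h2
    linear_combination (-L) * h2i
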